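/- Let X be a finite set, P a probability distribution on X with full support, ρ ∈ (-1,0) ∪ (0,∞), α = 1/(1+ρ), and 𝒜 a partition of X into M nonempty blocks with partition function A. Define Q_A(x) = A(x)^{-1/α} / ∑_{x'} A(x')^{-1/α}. Then (1/ρ)·log(∑_x P(x)·A(x)^ρ) = H_α(P) + I_α(P, Q_A) − log M. -/

import Mathlib

open Real Finset

theorem stmt18 {X : Type*} [Fintype X] [DecidableEq X]
    (P : X → ℝ) (hP : ∀ x, 0 < P x) (hPsum : ∑ x, P x = 1)
    (ρ : ℝ) (hρ : ρ ∈ Set.Ioo (-1 : ℝ) 0 ∪ Set.Ioi (0 : ℝ))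
    (α : ℝ) (hα : α = 1 / (1 + ρ))
    (B : X → Finset X) (hmem : ∀ x, x ∈ B x)
    (hblock : ∀ x y, y ∈ B x → B y = B x)
    (M : ℕ) (hM : (Finset.univ.image B).card = M)
    (QA : X → ℝ)
    (hQA : ∀ x, QA x = ((B x).card : ℝ) ^ (-(1 / α)) /
        ∑ x', ((B x').card : ℝ) ^ (-(1 / α))) :
    (1 / ρ) * Real.logb 2 (∑ x, P x * ((B x).card : ℝ) ^ ρ) =
      (1 / (1 - α)) * Real.logb 2 (∑ x, P x ^ α)
      + ((α / (1 - α)) * Real.logb 2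
          (∑ x, P x * (∑ x', (QA x' / QA x) ^ α) ^ ((1 - α) / α))
        - (1 / (1 - α)) * Real.logb 2 (∑ x, P x ^ α))
      - Real.logb 2 M := by
  -- basic facts
  have hXne : (Finset.univ : Finset X).Nonempty := by
    by_contra h
    rw [Finset.not_nonempty_iff_eq_empty] at h
    rw [h, Finset.sum_empty] at hPsum
    exact one_ne_zero hPsum.symm
  have hcard : ∀ x, (0:ℝ) < ((B x).card : ℝ) := fun x => by
    exact_mod_cast Finset.card_pos.2 ⟨x, hmem x⟩
  have hρ0 : ρ ≠ 0 := by
    rcases hρ with h | h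
    · exact ne_of_lt h.2
    · exact ne_of_gt h
  have h1ρ : 0 < 1 + ρ := by
    rcases hρ with h | h
    · linarith [h.1]
    · simp only [Set.mem_Ioi] at h; linarith
  have hα0 : 0 < α := by rw [hα]; positivity
  have hαne : α ≠ 0 := ne_of_gt hα0
  have hαρ : (1 - α) / α = ρ := by
    rw [hα]; field_simp; ring
  have hMpos : 0 < M := by
    rw [← hM]
    exact Finset.card_pos.2 (hXne.image B)
  have hMR : (0:ℝ) < (M:ℝ) := by exact_mod_cast hMpos
  -- sum of reciprocals of block sizes equals M
  have hMsum : ∑ x, (((B x).card : ℝ))⁻¹ = (M:ℝ) := by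
    rw [← Finset.sum_fiberwise_of_maps_to
      (fun x _ => Finset.mem_image_of_mem B (Finset.mem_univ x))
      (fun x => (((B x).card : ℝ))⁻¹)]
    rw [← hM, Finset.card_eq_sum_ones (Finset.univ.image B), Nat.cast_sum]
    refine Finset.sum_congr rfl ?_
    intro b hb
    obtain ⟨x, -, rfl⟩ := Finset.mem_image.1 hb
    have hfiber : Finset.univ.filter (fun y => B y = B x) = B x := by
      ext y
      simp only [Finset.mem_filter, Finset.mem_univ, true_and]
      constructor
      · intro h; rw [← h]; exact hmem y
      · intro h; exact hblock x y h
    have : ∀ y ∈ Finset.univ.filter (fun y => B y = B x),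
        (((B y).card : ℝ))⁻¹ = (((B x).card : ℝ))⁻¹ := by
      intro y hy
      rw [(Finset.mem_filter.1 hy).2]
    rw [Finset.sum_congr rfl this, Finset.sum_const, hfiber, nsmul_eq_mul,
      mul_inv_cancel₀ (ne_of_gt (hcard x))]
    simp
  -- the key simplification of the inner sum
  have hS : (0:ℝ) < ∑ x', ((B x').card : ℝ) ^ (-(1/α)) :=
    Finset.sum_pos (fun x _ => Real.rpow_pos_of_pos (hcard x) _) hXne
  have hkey : ∀ x, ∑ x', (QA x' / QA x) ^ α = ((B x).card : ℝ) * M := by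
    intro x
    have hterm : ∀ x', (QA x' / QA x) ^ α
        = (((B x').card : ℝ))⁻¹ * ((B x).card : ℝ) := by
      intro x'
      rw [hQA x', hQA x, div_div_div_cancel_right₀ (ne_of_gt hS)]
      rw [Real.div_rpow (Real.rpow_nonneg (le_of_lt (hcard x')) _)
        (Real.rpow_nonneg (le_of_lt (hcard x)) _)]
      rw [← Real.rpow_mul (le_of_lt (hcard x')), ← Real.rpow_mul (le_of_lt (hcard x))]
      rw [show -(1/α) * α = -1 by field_simp]
      rw [Real.rpow_neg_one, Real.rpow_neg_one]
      rw [div_eq_mul_inv, inv_inv]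
    rw [Finset.sum_congr rfl (fun x' _ => hterm x'), ← Finset.sum_mul, hMsum]
    ring
  -- rewrite the big sum
  have hT : (0:ℝ) < ∑ x, P x * ((B x).card : ℝ) ^ ρ :=
    Finset.sum_pos (fun x _ => mul_pos (hP x) (Real.rpow_pos_of_pos (hcard x) _)) hXne
  have hsum : ∑ x, P x * (∑ x', (QA x' / QA x) ^ α) ^ ((1 - α) / α)
      = (∑ x, P x * ((B x).card : ℝ) ^ ρ) * (M:ℝ) ^ ρ := by
    rw [Finset.sum_mul]
    refine Finset.sum_congr rfl ?_
    intro x _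
    rw [hkey x, hαρ, Real.mul_rpow (le_of_lt (hcard x)) (le_of_lt hMR)]
    ring
  rw [hsum]
  have hα1 : α / (1 - α) = 1 / ρ := by
    rw [← hαρ, one_div, inv_div]
  rw [hα1]
  rw [Real.logb_mul (ne_of_gt hT) (ne_of_gt (Real.rpow_pos_of_pos hMR ρ))]
  have hlogM : Real.logb 2 ((M:ℝ) ^ ρ) = ρ * Real.logb 2 (M:ℝ) := by
    rw [Real.logb, Real.logb, Real.log_rpow hMR]
    ring
  rw [hlogM]
  field_simp
  ring
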